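/- (Constant-ratio exponential extension) Let 1 < a < n, let f be defined on {1,…,a−1} with Σ_{t<a} f_t < 1, and let a ≤ x' ≤ n. Extend f by setting f_a = (1/((a−1)(n−1))) Σ_{t=1}^{a−1} (n+t−1) f_t and f_x = (1 + 1/(n−1))^{x−a} f_a for a ≤ x ≤ x'. Then α_f(x) = α_f(a−1) for all a ≤ x ≤ x'. -/

import Mathlib

/-- Constant-ratio exponential extension: extending f from {1,…,a−1} by
f_a = (1/((a−1)(n−1))) Σ_{t<a} (n+t−1) f_t and f_x = (1+1/(n−1))^{x−a} f_a keeps the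
expected competitive ratio constant: α_f(x) = α_f(a−1) for all a ≤ x ≤ x'. -/
theorem stmt_8 (n a x' : ℕ) (ha : 1 < a) (han : a < n) (hax : a ≤ x') (hx'n : x' ≤ n)
    (f : ℕ → ℝ) (hsub : ∑ t ∈ Finset.Icc 1 (a - 1), f t < 1)
    (hfa : f a = (1 / (((a:ℝ) - 1) * ((n:ℝ) - 1)))
        * ∑ t ∈ Finset.Icc 1 (a - 1), ((n:ℝ) + t - 1) * f t)
    (hfx : ∀ x, a ≤ x → x ≤ x' → f x = (1 + 1/((n:ℝ) - 1))^(x - a) * f a)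
    (A : ℕ → ℝ)
    (hA : ∀ x, A x = ∑ t ∈ Finset.Icc 1 x, (((n:ℝ) + t - 1) / x) * f t
        + 1 - ∑ t ∈ Finset.Icc 1 x, f t) :
    ∀ x, a ≤ x → x ≤ x' → A x = A (a - 1) := by
  have hn2 : 2 < n := lt_of_le_of_lt ha han
  have hnR : (2:ℝ) < n := by exact_mod_cast hn2
  have hn1 : ((n:ℝ) - 1) ≠ 0 := by linarith
  have haR : (1:ℝ) < a := by exact_mod_cast ha
  have ha0 : ((a:ℝ) - 1) ≠ 0 := by linarith
  have hA' : ∀ x : ℕ, A x = (∑ t ∈ Finset.Icc 1 x, ((n:ℝ) + t - 1) * f t) / x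
      + 1 - ∑ t ∈ Finset.Icc 1 x, f t := by
    intro x
    rw [hA x, Finset.sum_div]
    congr 2
    exact Finset.sum_congr rfl fun t _ => by ring
  have hsplit : ∀ (x : ℕ) (g : ℕ → ℝ),
      ∑ t ∈ Finset.Icc 1 (x + 1), g t = (∑ t ∈ Finset.Icc 1 x, g t) + g (x + 1) :=
    fun x g => Finset.sum_Icc_succ_top (by omega) g
  -- ratio lemma
  have hratio : ∀ x, a ≤ x → x + 1 ≤ x' →
      ((n:ℝ) - 1) * f (x + 1) = n * f x := by
    intro x hx hx1
    rw [hfx x hx (by omega), hfx (x+1) (by omega) hx1]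
    have hs : x + 1 - a = (x - a) + 1 := by omega
    rw [hs, pow_succ]
    field_simp
    ring
  suffices H : ∀ x, a ≤ x → x ≤ x' → A x = A (a-1) ∧
      (∑ t ∈ Finset.Icc 1 x, ((n:ℝ) + t - 1) * f t) = x * n * f x by
    intro x h1 h2; exact (H x h1 h2).1
  intro x hax1
  induction x, hax1 using Nat.le_induction with
  | base =>
    intro _
    have hb : a - 1 + 1 = a := by omega
    have hsa : ∀ g : ℕ → ℝ,
        ∑ t ∈ Finset.Icc 1 a, g t = (∑ t ∈ Finset.Icc 1 (a-1), g t) + g a := by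
      intro g
      have h := Finset.sum_Icc_succ_top (a := 1) (b := a-1) (by omega) g
      rwa [hb] at h
    have hS1 : (∑ t ∈ Finset.Icc 1 (a-1), ((n:ℝ) + t - 1) * f t)
        = ((a:ℝ) - 1) * ((n:ℝ) - 1) * f a := by
      rw [hfa]; field_simp
    constructor
    · rw [hA' a, hA' (a-1), hsa (fun t => ((n:ℝ) + t - 1) * f t), hsa f, hS1]
      have hcast : ((a - 1 : ℕ) : ℝ) = (a:ℝ) - 1 := by
        have : 1 ≤ a := le_of_lt ha
        push_cast [this]; ring
      rw [hcast]
      have haR0 : (a:ℝ) ≠ 0 := by linarith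
      field_simp
      ring
    · rw [hsa (fun t => ((n:ℝ) + t - 1) * f t), hS1]
      ring
  | succ x hx ih =>
    intro hxx'
    have hx' : x ≤ x' := le_trans (Nat.le_succ x) hxx'
    obtain ⟨hA1, hS1⟩ := ih hx'
    have key : ((n:ℝ) - 1) * f (x + 1) = n * f x := hratio x hx hxx'
    have hS1' : (∑ t ∈ Finset.Icc 1 (x+1), ((n:ℝ) + t - 1) * f t)
        = ((x:ℝ) + 1) * n * f (x + 1) := by
      rw [hsplit x (fun t => ((n:ℝ) + t - 1) * f t), hS1]
      push_cast
      linear_combination (-(x:ℝ)) * key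
    refine ⟨?_, by rw [hS1']; push_cast; ring⟩
    rw [hA' (x+1), ← hA1, hA' x, hsplit x f, hS1', hS1]
    have hxR : (1:ℝ) < x := by
      have : 1 < x := lt_of_lt_of_le ha hx
      exact_mod_cast this
    have hx0 : (x:ℝ) ≠ 0 := by linarith
    have hx10 : ((x:ℝ) + 1) ≠ 0 := by linarith
    push_cast
    field_simp
    linear_combination key
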